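/- Let D be an n×n matrix over 𝔽₂ with D·D = 0, let V be an invertible upper-triangular n×n matrix, and suppose R = D·V is reduced. If an index i satisfies i = low(R,j) for some nonzero column j of R, then column i of R is zero. (Correctness of clearing: a positive simplex—one appearing as the pivot low of some column—necessarily has zero column in the reduced matrix, so it may be zeroed out without reduction.) -/

import Mathlib

open Matrix

/-- The `low` of column `j` of `R`: the largest row index `i` with `R i j ≠ 0`,
or `⊥` if the column is zero. -/
def low {m n : ℕ} (R : Matrix (Fin m) (Fin n) (ZMod 2)) (j : Fin n) : WithBot (Fin m) :=
  (Finset.univ.filter fun i => R i j ≠ 0).max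

/-- `R` is reduced if no two distinct nonzero columns have equal lows. -/
def Reduced {m n : ℕ} (R : Matrix (Fin m) (Fin n) (ZMod 2)) : Prop :=
  ∀ j₁ j₂ : Fin n, low R j₁ ≠ ⊥ → low R j₁ = low R j₂ → j₁ = j₂

/-- A square matrix is upper triangular if `V i j = 0` whenever `i > j`. -/
def UpperTri {k : ℕ} (V : Matrix (Fin k) (Fin k) (ZMod 2)) : Prop :=
  ∀ i j : Fin k, j < i → V i j = 0

/-- correctness of clearing—the column of a pivot row index is zero. -/
theorem stmt_3 {n : ℕ} (D V : Matrix (Fin n) (Fin n) (ZMod 2))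
    (hDD : D * D = 0) (hV : IsUnit V) (hVt : UpperTri V)
    (hR : Reduced (D * V)) :
    ∀ i j : Fin n, low (D * V) j = ↑i → low (D * V) i = ⊥ := by
  intro i j hz
  set R := D * V with hRdef
  have hdet : IsUnit V.det := (Matrix.isUnit_iff_isUnit_det V).mp hV
  have hVW : V * V⁻¹ = 1 := Matrix.mul_nonsing_inv V hdet
  have hWV : V⁻¹ * V = 1 := Matrix.nonsing_inv_mul V hdet
  letI : Invertible V := hV.invertible
  have hWt : UpperTri V⁻¹ := by
    have hbt : V.BlockTriangular (id : Fin n → Fin n) := fun a b h => hVt a b h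
    exact fun a b h => Matrix.blockTriangular_inv_of_blockTriangular hbt h
  -- basic facts about `low`
  have hmem_low : ∀ (r k : Fin n), R r k ≠ 0 → (↑r : WithBot (Fin n)) ≤ low R k := by
    intro r k h
    exact Finset.le_max (Finset.mem_filter.mpr ⟨Finset.mem_univ r, h⟩)
  have hlow_zero : ∀ (r k : Fin n), low R k < ↑r → R r k = 0 := by
    intro r k h
    by_contra hc
    exact absurd (hmem_low r k hc) (not_le.mpr h)
  have hlow_bot : ∀ k : Fin n, low R k = ⊥ → ∀ r, R r k = 0 := by
    intro k h r
    by_contra hc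
    have h2 := hmem_low r k hc
    rw [h] at h2
    exact absurd h2 (by simp)
  have hz_i : R i j ≠ 0 := (Finset.mem_filter.mp (Finset.mem_of_max hz)).2
  have hz_top : ∀ k, i < k → R k j = 0 := by
    intro k hk
    exact hlow_zero k j (by rw [hz]; exact_mod_cast hk)
  -- the vector w = V⁻¹ * (column j of R)
  set z : Fin n → ZMod 2 := fun k => R k j with hzdef
  set w : Fin n → ZMod 2 := V⁻¹ *ᵥ z with hwdef
  have hw_apply : ∀ k, w k = ∑ m, V⁻¹ k m * z m := by
    intro k; simp [hwdef, Matrix.mulVec, dotProduct]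
  have hw_hi : ∀ k, i < k → w k = 0 := by
    intro k hk
    rw [hw_apply]
    apply Finset.sum_eq_zero
    intro m _
    rcases lt_or_ge m k with h | h
    · rw [hWt k m h, zero_mul]
    · rw [show z m = 0 from hz_top m (lt_of_lt_of_le hk h), mul_zero]
  have hWii : V⁻¹ i i ≠ 0 := by
    have h1 : (V⁻¹ * V) i i = 1 := by rw [hWV]; simp
    rw [Matrix.mul_apply] at h1
    have h2 : ∑ k, V⁻¹ i k * V k i = V⁻¹ i i * V i i := by
      apply Finset.sum_eq_single
      · intro m _ hm
        rcases lt_or_gt_of_ne hm with h | h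
        · rw [hWt i m h, zero_mul]
        · rw [hVt m i h, mul_zero]
      · intro h; exact absurd (Finset.mem_univ i) h
    intro hc
    rw [h2, hc, zero_mul] at h1
    exact zero_ne_one h1
  have hwi : w i ≠ 0 := by
    rw [hw_apply]
    have h2 : ∑ m, V⁻¹ i m * z m = V⁻¹ i i * z i := by
      apply Finset.sum_eq_single
      · intro m _ hm
        rcases lt_or_gt_of_ne hm with h | h
        · rw [hWt i m h, zero_mul]
        · rw [show z m = 0 from hz_top m h, mul_zero]
      · intro h; exact absurd (Finset.mem_univ i) h
    rw [h2]
    exact mul_ne_zero hWii hz_i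
  -- R *ᵥ w = 0
  have hRw : R *ᵥ w = 0 := by
    have h1 : R *ᵥ w = (R * V⁻¹) *ᵥ z := by rw [hwdef, Matrix.mulVec_mulVec]
    have h2 : R * V⁻¹ = D := by rw [hRdef, mul_assoc, hVW, mul_one]
    rw [h1, h2]
    funext r
    have h3 : (D *ᵥ z) r = (D * R) r j := by
      simp [hzdef, Matrix.mulVec, dotProduct, Matrix.mul_apply]
    rw [h3, hRdef, ← mul_assoc, hDD, Matrix.zero_mul]
    simp
  by_contra hbot
  set S : Finset (Fin n) := Finset.univ.filter (fun k => k ≠ i ∧ w k ≠ 0 ∧ low R k ≠ ⊥) with hSdef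
  set T : Finset (Fin n) := insert i S with hTdef
  have hT_low : ∀ k ∈ T, low R k ≠ ⊥ := by
    intro k hk
    rcases Finset.mem_insert.mp hk with h | h
    · subst h; exact hbot
    · exact ((Finset.mem_filter.mp h).2).2.2
  have hT_w : ∀ k ∈ T, w k ≠ 0 := by
    intro k hk
    rcases Finset.mem_insert.mp hk with h | h
    · subst h; exact hwi
    · exact ((Finset.mem_filter.mp h).2).2.1
  obtain ⟨m, hmT, hmax⟩ := T.exists_max_image (fun k => low R k) ⟨i, Finset.mem_insert_self i S⟩
  obtain ⟨r, hr⟩ := WithBot.ne_bot_iff_exists.mp (hT_low m hmT)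
  have hRrm : R r m ≠ 0 := (Finset.mem_filter.mp (Finset.mem_of_max hr.symm)).2
  have hother : ∀ k ∈ T, k ≠ m → R r k = 0 := by
    intro k hk hkm
    apply hlow_zero
    rcases lt_or_eq_of_le (hmax k hk) with h | h
    · rw [hr]; exact h
    · exact absurd (hR k m (hT_low k hk) h) hkm
  have hsum0 : ∑ k, R r k * w k = 0 := by
    have h4 := congrFun hRw r
    simpa [Matrix.mulVec, dotProduct] using h4
  have hzero : ∀ k ∈ Finset.univ, k ∉ T → R r k * w k = 0 := by
    intro k _ hkT
    by_cases hwk : w k = 0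
    · rw [hwk, mul_zero]
    · have hki : k ≠ i := by intro h; apply hkT; rw [h]; exact Finset.mem_insert_self i S
      have hlb : low R k = ⊥ := by
        by_contra hlb
        exact hkT (Finset.mem_insert.mpr (Or.inr (Finset.mem_filter.mpr
          ⟨Finset.mem_univ k, hki, hwk, hlb⟩)))
      rw [hlow_bot k hlb r, zero_mul]
  have hsumT : ∑ k ∈ T, R r k * w k = 0 := by
    rw [Finset.sum_subset (Finset.subset_univ T) hzero]
    exact hsum0
  have hsingle : ∑ k ∈ T, R r k * w k = R r m * w m := by
    apply Finset.sum_eq_single_of_mem m hmT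
    intro k hk hkm
    rw [hother k hk hkm, zero_mul]
  rw [hsingle] at hsumT
  exact mul_ne_zero hRrm (hT_w m hmT) hsumT
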